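/- Let C > 0 and let X_1, …, X_n be independent random variables with X_i ∈ [0, C] almost surely. Let μ = E[Σ_i X_i]. Then E[min(Σ_i X_i, C)] ≥ (1 - e^{-μ/C})·C. -/

import Mathlib

open MeasureTheory ProbabilityTheory

/-- iIndepFun is stable under a.e. modification (countable index type). -/
lemma aux_iIndepFun_ae_eq {Ω : Type*} [MeasurableSpace Ω] {μ : Measure Ω} {n : ℕ}
    {f g : Fin n → Ω → ℝ} (hfg : ∀ i, f i =ᵐ[μ] g i)
    (h : iIndepFun f μ) :
    iIndepFun g μ := by
  rw [iIndepFun_iff_measure_inter_preimage_eq_mul] at h ⊢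
  intro S sets hS
  have h1 : ∀ i : Fin n, (g i ⁻¹' sets i : Set Ω) =ᵐ[μ] (f i ⁻¹' sets i) := by
    intro i
    filter_upwards [hfg i] with ω hω
    show (g i ω ∈ sets i) = (f i ω ∈ sets i)
    rw [hω]
  have h2 : (⋂ i ∈ S, g i ⁻¹' sets i : Set Ω) =ᵐ[μ] (⋂ i ∈ S, f i ⁻¹' sets i) := by
    have hall : ∀ᵐ ω ∂μ, ∀ i : Fin n, f i ω = g i ω := ae_all_iff.2 hfg
    filter_upwards [hall] with ω hω
    show (ω ∈ ⋂ i ∈ S, g i ⁻¹' sets i) = (ω ∈ ⋂ i ∈ S, f i ⁻¹' sets i)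
    simp only [Set.mem_iInter, Set.mem_preimage, eq_iff_iff]
    exact ⟨fun hmem i hi => by rw [hω i]; exact hmem i hi,
      fun hmem i hi => by rw [← hω i]; exact hmem i hi⟩
  rw [measure_congr h2, h S hS]
  exact Finset.prod_congr rfl fun i _ => (measure_congr (h1 i)).symm

/-- Expectation of a product of independent, measurable, a.e.-[0,1]-valued random
variables equals the product of expectations (and the product is integrable). -/
lemma aux_integral_prod {Ω : Type*} [MeasurableSpace Ω] {μ : Measure Ω}
    [IsProbabilityMeasure μ] {n : ℕ} {Y : Fin n → Ω → ℝ}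
    (hmeas : ∀ i, Measurable (Y i))
    (h01 : ∀ i, ∀ᵐ ω ∂μ, 0 ≤ Y i ω ∧ Y i ω ≤ 1)
    (hindep : iIndepFun Y μ) (s : Finset (Fin n)) :
    Integrable (fun ω => ∏ i ∈ s, Y i ω) μ ∧
      (∫ ω, ∏ i ∈ s, Y i ω ∂μ) = ∏ i ∈ s, ∫ ω, Y i ω ∂μ := by
  classical
  induction s using Finset.induction_on with
  | empty => simp
  | @insert a s ha ih =>
    have hYint : ∀ i, Integrable (Y i) μ := by
      intro i
      refine (integrable_const (1 : ℝ)).mono' (hmeas i).aestronglyMeasurable ?_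
      filter_upwards [h01 i] with ω hω
      rw [Real.norm_eq_abs, abs_of_nonneg hω.1]; exact hω.2
    have hprodint : Integrable (fun ω => ∏ i ∈ s, Y i ω) μ := ih.1
    have hind : IndepFun (∏ j ∈ s, Y j) (Y a) μ :=
      hindep.indepFun_finsetProd_of_notMem hmeas ha
    have hind' : IndepFun (Y a) (∏ j ∈ s, Y j) μ := hind.symm
    have hprodfun : (∏ j ∈ s, Y j) = fun ω => ∏ j ∈ s, Y j ω := by
      funext ω; simp [Finset.prod_apply]
    have hmul := hind'.integral_mul_eq_mul_integral (hYint a).1 (by rw [hprodfun]; exact hprodint.1)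
    have hmulint := hind'.integrable_mul (hYint a) (by rw [hprodfun]; exact hprodint)
    constructor
    · have : (fun ω => ∏ i ∈ insert a s, Y i ω) =
          (Y a * ∏ j ∈ s, Y j : Ω → ℝ) := by
        funext ω; simp [Finset.prod_insert ha, Finset.prod_apply]
      rw [this]; exact hmulint
    · have h1 : (fun ω => ∏ i ∈ insert a s, Y i ω) =
          fun ω => (Y a * ∏ j ∈ s, Y j : Ω → ℝ) ω := by
        funext ω; simp [Finset.prod_insert ha, Finset.prod_apply]
      rw [h1]
      calc (∫ ω, (Y a * ∏ j ∈ s, Y j : Ω → ℝ) ω ∂μ)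
          = (∫ ω, Y a ω ∂μ) * ∫ ω, (∏ j ∈ s, Y j) ω ∂μ := hmul
        _ = (∫ ω, Y a ω ∂μ) * ∫ ω, ∏ j ∈ s, Y j ω ∂μ := by rw [hprodfun]
        _ = ∏ i ∈ insert a s, ∫ ω, Y i ω ∂μ := by
            rw [ih.2, Finset.prod_insert ha]

/-- Weierstrass-type inequality: `1 - ∑ t ≤ ∏ (1 - t)` for `t i ∈ [0,1]`. -/
lemma aux_one_sub_sum_le_prod {n : ℕ} (t : Fin n → ℝ) (h0 : ∀ i, 0 ≤ t i)
    (h1 : ∀ i, t i ≤ 1) (s : Finset (Fin n)) :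
    1 - ∑ i ∈ s, t i ≤ ∏ i ∈ s, (1 - t i) := by
  classical
  induction s using Finset.induction_on with
  | empty => simp
  | @insert a s ha ih =>
    have hps0 : 0 ≤ ∏ i ∈ s, (1 - t i) :=
      Finset.prod_nonneg fun i _ => by linarith [h1 i]
    have hps1 : ∏ i ∈ s, (1 - t i) ≤ 1 :=
      Finset.prod_le_one (fun i _ => by linarith [h1 i]) (fun i _ => by linarith [h0 i])
    rw [Finset.prod_insert ha, Finset.sum_insert ha]
    nlinarith [h0 a, h1 a]

theorem stmt_3 {Ω : Type*} [MeasurableSpace Ω] (μ : Measure Ω) [IsProbabilityMeasure μ]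
    (C : ℝ) (hC : 0 < C) (n : ℕ) (X : Fin n → Ω → ℝ)
    (hindep : iIndepFun X μ)
    (h0 : ∀ i, ∀ᵐ ω ∂μ, 0 ≤ X i ω) (hCle : ∀ i, ∀ᵐ ω ∂μ, X i ω ≤ C)
    (hint : ∀ i, Integrable (X i) μ) :
    (∫ ω, min (∑ i, X i ω) C ∂μ) ≥
      (1 - Real.exp (-(∫ ω, ∑ i, X i ω ∂μ) / C)) * C := by
  classical
  -- measurable modifications
  set X' : Fin n → Ω → ℝ := fun i => (hint i).1.mk (X i) with hX'def
  have hX'eq : ∀ i, X i =ᵐ[μ] X' i := fun i => (hint i).1.ae_eq_mk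
  have hX'meas : ∀ i, Measurable (X' i) := fun i => (hint i).1.stronglyMeasurable_mk.measurable
  have hX'int : ∀ i, Integrable (X' i) μ := fun i => (hint i).congr (hX'eq i)
  have hX'indep : iIndepFun X' μ := aux_iIndepFun_ae_eq hX'eq hindep
  have hX'01 : ∀ i, ∀ᵐ ω ∂μ, 0 ≤ X' i ω ∧ X' i ω ≤ C := by
    intro i
    filter_upwards [h0 i, hCle i, hX'eq i] with ω hω1 hω2 hω3
    rw [← hω3]; exact ⟨hω1, hω2⟩
  -- the auxiliary variables Y i = 1 - X' i / C
  set Y : Fin n → Ω → ℝ := fun i ω => 1 - X' i ω / C with hYdef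
  have hYmeas : ∀ i, Measurable (Y i) := fun i =>
    (measurable_const.sub ((hX'meas i).div_const C))
  have hY01 : ∀ i, ∀ᵐ ω ∂μ, 0 ≤ Y i ω ∧ Y i ω ≤ 1 := by
    intro i
    filter_upwards [hX'01 i] with ω hω
    constructor
    · have : X' i ω / C ≤ 1 := (div_le_one hC).2 hω.2
      simp only [hYdef]; linarith
    · have : 0 ≤ X' i ω / C := div_nonneg hω.1 hC.le
      simp only [hYdef]; linarith
  have hYindep : iIndepFun Y μ := by
    have := hX'indep.comp (fun _ x => 1 - x / C)
      (fun _ => measurable_const.sub (measurable_id.div_const C))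
    exact this
  obtain ⟨hYprodint, hYprodeq⟩ := aux_integral_prod hYmeas hY01 hYindep Finset.univ
  -- expectations
  set m : Fin n → ℝ := fun i => ∫ ω, X' i ω ∂μ with hmdef
  have hm0 : ∀ i, 0 ≤ m i := fun i =>
    integral_nonneg_of_ae ((hX'01 i).mono fun ω hω => hω.1)
  have hmC : ∀ i, m i ≤ C := by
    intro i
    have := integral_mono_ae (hX'int i) (integrable_const C)
      ((hX'01 i).mono fun ω hω => hω.2)
    simpa using this
  have hEY : ∀ i, (∫ ω, Y i ω ∂μ) = 1 - m i / C := by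
    intro i
    simp only [hYdef]
    rw [integral_sub (integrable_const 1) ((hX'int i).div_const C)]
    simp [integral_div, hmdef]
  -- the key product bound: ∏ E[Y i] ≤ exp(-∑ m i / C)
  have hprod_le : ∏ i, ∫ ω, Y i ω ∂μ ≤ Real.exp (-(∑ i, m i) / C) := by
    have : ∀ i : Fin n, (∫ ω, Y i ω ∂μ) ≤ Real.exp (-(m i / C)) := by
      intro i; rw [hEY i]
      have := Real.add_one_le_exp (-(m i / C))
      linarith
    calc ∏ i, ∫ ω, Y i ω ∂μ ≤ ∏ i, Real.exp (-(m i / C)) := by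
          refine Finset.prod_le_prod (fun i _ => ?_) (fun i _ => this i)
          rw [hEY i]
          have : m i / C ≤ 1 := (div_le_one hC).2 (hmC i)
          linarith
      _ = Real.exp (∑ i, -(m i / C)) := by rw [Real.exp_sum]
      _ = Real.exp (-(∑ i, m i) / C) := by
          congr 1
          rw [Finset.sum_neg_distrib, neg_div, Finset.sum_div]
  -- pointwise: min (∑ X' i ω) C ≥ C - C * ∏ Y i ω
  have hpt : ∀ᵐ ω ∂μ, C - C * ∏ i, Y i ω ≤ min (∑ i, X' i ω) C := by
    have hall : ∀ᵐ ω ∂μ, ∀ i, 0 ≤ X' i ω ∧ X' i ω ≤ C := ae_all_iff.2 hX'01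
    filter_upwards [hall] with ω hω
    set t : Fin n → ℝ := fun i => X' i ω / C with htdef
    have ht0 : ∀ i, 0 ≤ t i := fun i => div_nonneg (hω i).1 hC.le
    have ht1 : ∀ i, t i ≤ 1 := fun i => (div_le_one hC).2 (hω i).2
    have hprodY : (∏ i, Y i ω) = ∏ i, (1 - t i) := by
      refine Finset.prod_congr rfl fun i _ => ?_
      simp [hYdef, htdef]
    have hlow : 1 - ∑ i, t i ≤ ∏ i, (1 - t i) :=
      aux_one_sub_sum_le_prod t ht0 ht1 Finset.univ
    have hp0 : 0 ≤ ∏ i, (1 - t i) :=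
      Finset.prod_nonneg fun i _ => by linarith [ht1 i]
    have hsum : (∑ i, X' i ω) = C * ∑ i, t i := by
      rw [Finset.mul_sum]
      refine Finset.sum_congr rfl fun i _ => ?_
      simp only [htdef]; field_simp
    rw [hprodY, le_min_iff]
    constructor
    · rw [hsum]; nlinarith
    · nlinarith
  -- integrability of min
  have hSint : Integrable (fun ω => ∑ i, X' i ω) μ := integrable_finset_sum _ fun i _ => hX'int i
  have hminint : Integrable (fun ω => min (∑ i, X' i ω) C) μ := by
    have := hSint.inf (integrable_const C)
    exact this
  -- integrate the pointwise bound
  have hlhs : Integrable (fun ω => C - C * ∏ i, Y i ω) μ :=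
    (integrable_const C).sub (hYprodint.const_mul C)
  have hInt1 : (∫ ω, (C - C * ∏ i, Y i ω) ∂μ) ≤ ∫ ω, min (∑ i, X' i ω) C ∂μ :=
    integral_mono_ae hlhs hminint hpt
  have hInt2 : (∫ ω, (C - C * ∏ i, Y i ω) ∂μ) = C - C * ∏ i, ∫ ω, Y i ω ∂μ := by
    rw [integral_sub (integrable_const C) (hYprodint.const_mul C)]
    simp [integral_const_mul, hYprodeq]
  -- translate back to X
  have heqmin : (∫ ω, min (∑ i, X i ω) C ∂μ) = ∫ ω, min (∑ i, X' i ω) C ∂μ := by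
    refine integral_congr_ae ?_
    have hall : ∀ᵐ ω ∂μ, ∀ i, X i ω = X' i ω := ae_all_iff.2 hX'eq
    filter_upwards [hall] with ω hω
    congr 1
    exact Finset.sum_congr rfl fun i _ => hω i
  have heqmean : (∫ ω, ∑ i, X i ω ∂μ) = ∑ i, m i := by
    rw [integral_finset_sum _ fun i _ => hint i]
    exact Finset.sum_congr rfl fun i _ => integral_congr_ae (hX'eq i)
  rw [ge_iff_le, heqmin, heqmean]
  calc (1 - Real.exp (-(∑ i, m i) / C)) * C
      = C - C * Real.exp (-(∑ i, m i) / C) := by ring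
    _ ≤ C - C * ∏ i, ∫ ω, Y i ω ∂μ := by nlinarith [hprod_le]
    _ = ∫ ω, (C - C * ∏ i, Y i ω) ∂μ := hInt2.symm
    _ ≤ ∫ ω, min (∑ i, X' i ω) C ∂μ := hInt1
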